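/- Let f : c([0,1]) → Y be a map to a metric space Y such that for every K > 0 there is L_K > 0 with d(f(x,t), f(x',t')) ≤ L_K · d((x,t),(x',t')) whenever x, x', t, t' ∈ [0,K]. Then there exists a coarse map g : c([0,1]) → c([0,1]) of the form g(x,t) = (ρ(x), t·ρ(x)/x) for a monotone surjective ρ : [0,∞) → [0,∞), such that f ∘ g is 1-Lipschitz and g is coarsely homotopic to the identity. -/

import Mathlib

open Metric Bornology Set

noncomputable section

/-- The metric cone over `[0,1]`: `c([0,1]) = {(x,t) : 0 ≤ t ≤ x} ⊆ ℝ²` with the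
Euclidean metric. -/
def c01 : Set (EuclideanSpace ℝ (Fin 2)) := {v | 0 ≤ v 1 ∧ v 1 ≤ v 0}

/-- A map between metric spaces is bornologous if it admits a control function. -/
def Bornologous {X Y : Type*} [PseudoMetricSpace X] [PseudoMetricSpace Y]
    (f : X → Y) : Prop :=
  ∃ ρ : ℝ → ℝ, ∀ x x', dist (f x) (f x') ≤ ρ (dist x x')

/-- A map is coarse if it is bornologous and preimages of bounded sets are bounded. -/
def CoarseMap {X Y : Type*} [PseudoMetricSpace X] [PseudoMetricSpace Y]
    (f : X → Y) : Prop :=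
  Bornologous f ∧ ∀ B : Set Y, Bornology.IsBounded B → Bornology.IsBounded (f ⁻¹' B)

/-- The `p`-cylinder `I_p X = {(x,s) ∈ X × [0,∞) : s ≤ p(x)+1}` with the `ℓ²` product
metric. -/
def Cyl {X : Type*} [MetricSpace X] (p : X → ℝ) : Type _ :=
  {q : WithLp 2 (X × ℝ) // 0 ≤ q.ofLp.2 ∧ q.ofLp.2 ≤ p q.ofLp.1 + 1}

instance {X : Type*} [MetricSpace X] (p : X → ℝ) : MetricSpace (Cyl p) := by
  unfold Cyl; infer_instance

/-- The bottom inclusion `i₀ : X → I_p X`. -/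
def cylI0 {X : Type*} [MetricSpace X] {p : X → ℝ} (hp : ∀ x, -1 ≤ p x) (x : X) :
    Cyl p :=
  ⟨WithLp.toLp 2 (x, 0), le_rfl, by have := hp x; dsimp; linarith⟩

/-- The top inclusion `i₁ : X → I_p X`. -/
def cylI1 {X : Type*} [MetricSpace X] {p : X → ℝ} (hp : ∀ x, -1 ≤ p x) (x : X) :
    Cyl p :=
  ⟨WithLp.toLp 2 (x, p x + 1), by have := hp x; dsimp; constructor <;> linarith⟩


namespace Repar

def monoMax (F : ℕ → ℝ) : ℕ → ℝ
  | 0 => max 1 (F 0)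
  | n+1 => max (monoMax F n) (max 1 (F (n+1)))

lemma one_le_monoMax (F : ℕ → ℝ) : ∀ n, 1 ≤ monoMax F n
  | 0 => le_max_left _ _
  | n+1 => le_trans (one_le_monoMax F n) (le_max_left _ _)

lemma monoMax_mono (F : ℕ → ℝ) : Monotone (monoMax F) :=
  monotone_nat_of_le_succ fun _ => le_max_left _ _

lemma le_monoMax (F : ℕ → ℝ) : ∀ n, F n ≤ monoMax F n
  | 0 => le_max_right _ _
  | _+1 => le_trans (le_max_right _ _) (le_max_right _ _)

variable (Lb : ℕ → ℝ)

def cVal (n : ℕ) (a : ℝ) : ℝ :=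
  if 6 * Lb (⌈a⌉₊ + 4) * (a + 1) ≤ n then min 1 (1 / (6 * Lb (⌈a⌉₊ + 4))) else 0

def aSeq : ℕ → ℝ
  | 0 => 0
  | n + 1 => aSeq n + cVal Lb n (aSeq n)

def cSeq (n : ℕ) : ℝ := cVal Lb n (aSeq Lb n)

lemma aSeq_zero : aSeq Lb 0 = 0 := rfl
lemma aSeq_succ (n : ℕ) : aSeq Lb (n+1) = aSeq Lb n + cSeq Lb n := rfl

variable {Lb}

lemma Lb_pos (hL1 : ∀ m, 1 ≤ Lb m) (m : ℕ) : 0 < Lb m := lt_of_lt_of_le one_pos (hL1 m)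

lemma cSeq_nonneg (hL1 : ∀ m, 1 ≤ Lb m) (n : ℕ) : 0 ≤ cSeq Lb n := by
  unfold cSeq cVal
  split
  · have := Lb_pos hL1 (⌈aSeq Lb n⌉₊ + 4)
    positivity
  · exact le_refl 0

lemma cSeq_le_inv (hL1 : ∀ m, 1 ≤ Lb m) (n : ℕ) :
    cSeq Lb n ≤ 1 / (6 * Lb (⌈aSeq Lb n⌉₊ + 4)) := by
  unfold cSeq cVal
  split
  · exact min_le_right _ _
  · have := Lb_pos hL1 (⌈aSeq Lb n⌉₊ + 4); positivity

lemma cSeq_le_sixth (hL1 : ∀ m, 1 ≤ Lb m) (n : ℕ) : cSeq Lb n ≤ 1/6 := by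
  refine le_trans (cSeq_le_inv hL1 n) ?_
  have h := hL1 (⌈aSeq Lb n⌉₊ + 4)
  rw [div_le_div_iff₀ (by linarith) (by norm_num)]
  linarith

lemma cSeq_le_one (hL1 : ∀ m, 1 ≤ Lb m) (n : ℕ) : cSeq Lb n ≤ 1 :=
  le_trans (cSeq_le_sixth hL1 n) (by norm_num)

lemma aSeq_nonneg (hL1 : ∀ m, 1 ≤ Lb m) : ∀ n, 0 ≤ aSeq Lb n
  | 0 => le_refl 0
  | n+1 => add_nonneg (aSeq_nonneg hL1 n) (cSeq_nonneg hL1 n)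

lemma aSeq_mono (hL1 : ∀ m, 1 ≤ Lb m) : Monotone (aSeq Lb) :=
  monotone_nat_of_le_succ fun n => by
    rw [aSeq_succ]; linarith [cSeq_nonneg hL1 n]

lemma aSeq_diff (hL1 : ∀ m, 1 ≤ Lb m) {i j : ℕ} (h : i ≤ j) :
    aSeq Lb j - aSeq Lb i ≤ ((j : ℝ) - i)/6 := by
  induction j with
  | zero => interval_cases i; simp
  | succ n ih =>
    rcases Nat.lt_or_ge i (n+1) with hi | hi
    · have h1 := ih (Nat.lt_succ_iff.mp hi)
      have h2 := cSeq_le_sixth hL1 n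
      rw [aSeq_succ]; push_cast; linarith
    · have : i = n + 1 := le_antisymm h hi
      subst this; simp

lemma aSeq_le (hL1 : ∀ m, 1 ≤ Lb m) (n : ℕ) : aSeq Lb n ≤ (n : ℝ)/6 := by
  have := aSeq_diff hL1 (Nat.zero_le n)
  simp only [aSeq_zero, Nat.cast_zero, sub_zero] at this
  exact this


lemma ceil_succ_le (hL1 : ∀ m, 1 ≤ Lb m) (n : ℕ) :
    ⌈aSeq Lb (n+1)⌉₊ ≤ ⌈aSeq Lb n⌉₊ + 1 := by
  have h1 : aSeq Lb (n+1) ≤ aSeq Lb n + 1 := by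
    rw [aSeq_succ]; linarith [cSeq_le_one hL1 n]
  have h2 : aSeq Lb n + 1 ≤ (⌈aSeq Lb n⌉₊ : ℝ) + 1 := by
    linarith [Nat.le_ceil (aSeq Lb n)]
  calc ⌈aSeq Lb (n+1)⌉₊ ≤ ⌈(⌈aSeq Lb n⌉₊ : ℝ) + 1⌉₊ :=
        Nat.ceil_le_ceil (le_trans h1 h2)
    _ = ⌈aSeq Lb n⌉₊ + 1 := by
        rw [show ((⌈aSeq Lb n⌉₊ : ℝ) + 1) = ((⌈aSeq Lb n⌉₊ + 1 : ℕ) : ℝ) by push_cast; ring,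
          Nat.ceil_natCast]

lemma cSeq_mul_le (hL1 : ∀ m, 1 ≤ Lb m) (hLm : Monotone Lb) (n : ℕ) :
    Lb (⌈aSeq Lb (n+1)⌉₊ + 3) * cSeq Lb n ≤ 1/6 := by
  have hmono : Lb (⌈aSeq Lb (n+1)⌉₊ + 3) ≤ Lb (⌈aSeq Lb n⌉₊ + 4) := by
    apply hLm
    have := ceil_succ_le hL1 n
    omega
  have hpos := Lb_pos hL1 (⌈aSeq Lb (n+1)⌉₊ + 3)
  have hpos' := Lb_pos hL1 (⌈aSeq Lb n⌉₊ + 4)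
  have hc := cSeq_le_inv hL1 n
  have hc0 := cSeq_nonneg hL1 n
  calc Lb (⌈aSeq Lb (n+1)⌉₊ + 3) * cSeq Lb n
      ≤ Lb (⌈aSeq Lb n⌉₊ + 4) * (1 / (6 * Lb (⌈aSeq Lb n⌉₊ + 4))) := by
        apply mul_le_mul hmono hc hc0 (le_of_lt hpos')
    _ = 1/6 := by field_simp

lemma invariant (hL1 : ∀ m, 1 ≤ Lb m) (hLm : Monotone Lb) :
    ∀ n : ℕ, 6 * Lb (⌈aSeq Lb n⌉₊ + 3) * aSeq Lb n ≤ max ((n : ℝ) - 1) 0 := by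
  intro n
  induction n with
  | zero => simp [aSeq_zero]
  | succ n ih =>
    by_cases hc : 6 * Lb (⌈aSeq Lb n⌉₊ + 4) * (aSeq Lb n + 1) ≤ (n : ℝ)
    · have hmono : Lb (⌈aSeq Lb (n+1)⌉₊ + 3) ≤ Lb (⌈aSeq Lb n⌉₊ + 4) := by
        apply hLm; have := ceil_succ_le hL1 n; omega
      have ha1 : aSeq Lb (n+1) ≤ aSeq Lb n + 1 := by
        rw [aSeq_succ]; linarith [cSeq_le_one hL1 n]
      have ha0 := aSeq_nonneg hL1 (n+1)
      have hpos := Lb_pos hL1 (⌈aSeq Lb (n+1)⌉₊ + 3)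
      have hpos' := Lb_pos hL1 (⌈aSeq Lb n⌉₊ + 4)
      have : 6 * Lb (⌈aSeq Lb (n+1)⌉₊ + 3) * aSeq Lb (n+1)
          ≤ 6 * Lb (⌈aSeq Lb n⌉₊ + 4) * (aSeq Lb n + 1) := by
        apply mul_le_mul (by linarith) ha1 ha0 (by linarith)
      refine le_trans (le_trans this hc) ?_
      push_cast
      exact le_max_of_le_left (by linarith)
    · have hceq : cSeq Lb n = 0 := by
        unfold cSeq cVal
        rw [if_neg hc]
      have haeq : aSeq Lb (n+1) = aSeq Lb n := by rw [aSeq_succ, hceq, add_zero]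
      rw [haeq]
      refine le_trans ih ?_
      apply max_le_max _ le_rfl
      push_cast; linarith

lemma aSeq_unbounded (hL1 : ∀ m, 1 ≤ Lb m) (hLm : Monotone Lb) (y : ℝ) :
    ∃ n, y ≤ aSeq Lb n := by
  by_contra hcon
  push_neg at hcon
  have hy : 0 < y := lt_of_le_of_lt (le_refl 0 |>.trans (aSeq_nonneg hL1 0)) (hcon 0)
  set Λ : ℝ := Lb (⌈y⌉₊ + 4) with hΛ
  have hΛ1 : 1 ≤ Λ := hL1 _
  have hLble : ∀ n, Lb (⌈aSeq Lb n⌉₊ + 4) ≤ Λ := by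
    intro n
    apply hLm
    have : ⌈aSeq Lb n⌉₊ ≤ ⌈y⌉₊ := Nat.ceil_le_ceil (le_of_lt (hcon n))
    omega
  -- for n large, the condition holds, so cSeq n ≥ 1/(6Λ)
  have hstep : ∀ n : ℕ, 6 * Λ * (y + 1) ≤ (n : ℝ) → 1/(6*Λ) ≤ cSeq Lb n := by
    intro n hn
    have hcond : 6 * Lb (⌈aSeq Lb n⌉₊ + 4) * (aSeq Lb n + 1) ≤ (n : ℝ) := by
      refine le_trans ?_ hn
      have h1 := hLble n
      have h2 := hcon n
      have h3 := aSeq_nonneg hL1 n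
      have h4 := Lb_pos hL1 (⌈aSeq Lb n⌉₊ + 4)
      nlinarith
    unfold cSeq cVal
    rw [if_pos hcond]
    have h1 := hLble n
    have h4 := Lb_pos hL1 (⌈aSeq Lb n⌉₊ + 4)
    apply le_min
    · rw [div_le_one (by linarith)]; linarith
    · apply div_le_div_of_nonneg_left (by norm_num) (by linarith) (by linarith)
  set N := ⌈6 * Λ * (y + 1)⌉₊ with hN
  have hgrow : ∀ k : ℕ, (k : ℝ)/(6*Λ) ≤ aSeq Lb (N + k) := by
    intro k
    induction k with
    | zero => simpa using aSeq_nonneg hL1 N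
    | succ k ih =>
      have hcnd : 6 * Λ * (y + 1) ≤ ((N + k : ℕ) : ℝ) := by
        push_cast
        have := Nat.le_ceil (6 * Λ * (y + 1))
        have : 6 * Λ * (y+1) ≤ (N : ℝ) := this
        linarith [Nat.cast_nonneg (α := ℝ) k]
      have := hstep (N + k) hcnd
      have heq : aSeq Lb (N + (k+1)) = aSeq Lb (N + k) + cSeq Lb (N + k) := by
        rw [show N + (k+1) = (N + k) + 1 by ring, aSeq_succ]
      rw [heq]
      push_cast
      have h6 : (0:ℝ) < 6 * Λ := by linarith
      calc ((k:ℝ) + 1)/(6*Λ) = (k:ℝ)/(6*Λ) + 1/(6*Λ) := by field_simp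
        _ ≤ aSeq Lb (N+k) + cSeq Lb (N+k) := add_le_add ih this
  -- contradiction
  obtain ⟨k, hk⟩ : ∃ k : ℕ, y * (6 * Λ) ≤ (k : ℝ) := exists_nat_ge _
  have := hgrow k
  have h6 : (0:ℝ) < 6 * Λ := by linarith
  have : y ≤ aSeq Lb (N + k) := by
    refine le_trans ?_ this
    rw [le_div_iff₀ h6]
    exact hk
  exact absurd (hcon (N+k)) (not_lt.mpr this)

variable (Lb) in
def rho (x : ℝ) : ℝ :=
  aSeq Lb ⌊max x 0⌋₊ + cSeq Lb ⌊max x 0⌋₊ * (max x 0 - ⌊max x 0⌋₊)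

lemma rho_clamp (x : ℝ) : rho Lb x = rho Lb (max x 0) := by
  unfold rho; rw [max_eq_left (le_max_right x 0)]

lemma rho_eval {x : ℝ} (hx : 0 ≤ x) :
    rho Lb x = aSeq Lb ⌊x⌋₊ + cSeq Lb ⌊x⌋₊ * (x - ⌊x⌋₊) := by
  unfold rho; rw [max_eq_left hx]

lemma rho_nat (n : ℕ) : rho Lb (n : ℝ) = aSeq Lb n := by
  rw [rho_eval (Nat.cast_nonneg n), Nat.floor_natCast]; ring

lemma rho_band {n : ℕ} {x : ℝ} (h1 : (n:ℝ) ≤ x) (h2 : x ≤ (n:ℝ) + 1) :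
    rho Lb x = aSeq Lb n + cSeq Lb n * (x - n) := by
  have hx0 : 0 ≤ x := le_trans (Nat.cast_nonneg n) h1
  rcases lt_or_eq_of_le h2 with h2' | h2'
  · have : ⌊x⌋₊ = n := by
      rw [Nat.floor_eq_iff hx0]
      exact ⟨h1, by push_cast; linarith⟩
    rw [rho_eval hx0, this]
  · rw [h2', show (n:ℝ) + 1 = ((n+1 : ℕ) : ℝ) by push_cast; ring, rho_nat, aSeq_succ]
    push_cast; ring

lemma rho_nonneg (hL1 : ∀ m, 1 ≤ Lb m) (x : ℝ) : 0 ≤ rho Lb x := by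
  unfold rho
  have h1 := aSeq_nonneg hL1 ⌊max x 0⌋₊
  have h2 := cSeq_nonneg hL1 ⌊max x 0⌋₊
  have h3 : (⌊max x 0⌋₊ : ℝ) ≤ max x 0 := Nat.floor_le (le_max_right x 0)
  nlinarith

lemma rho_le_sixth (hL1 : ∀ m, 1 ≤ Lb m) (x : ℝ) : rho Lb x ≤ max x 0 / 6 := by
  unfold rho
  have h1 := aSeq_le hL1 ⌊max x 0⌋₊
  have h2 := cSeq_le_sixth hL1 ⌊max x 0⌋₊
  have h2' := cSeq_nonneg hL1 ⌊max x 0⌋₊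
  have h3 : (⌊max x 0⌋₊ : ℝ) ≤ max x 0 := Nat.floor_le (le_max_right x 0)
  nlinarith

lemma rho_le_self (hL1 : ∀ m, 1 ≤ Lb m) {x : ℝ} (hx : 0 ≤ x) : rho Lb x ≤ x := by
  have := rho_le_sixth hL1 x
  rw [max_eq_left hx] at this
  linarith

lemma rho_mono_lip (hL1 : ∀ m, 1 ≤ Lb m) {x y : ℝ} (hx : 0 ≤ x) (hxy : x ≤ y) :
    rho Lb x ≤ rho Lb y ∧ rho Lb y - rho Lb x ≤ (y - x)/6 := by
  have hy : 0 ≤ y := le_trans hx hxy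
  set m := ⌊x⌋₊ with hm
  set m' := ⌊y⌋₊ with hm'
  have hmm' : m ≤ m' := Nat.floor_le_floor hxy
  have hxm : (m:ℝ) ≤ x := Nat.floor_le hx
  have hym : (m':ℝ) ≤ y := Nat.floor_le hy
  have hxm1 : x < (m:ℝ) + 1 := Nat.lt_floor_add_one x
  have hym1 : y < (m':ℝ) + 1 := Nat.lt_floor_add_one y
  have hcx := cSeq_nonneg hL1 m
  have hcx6 := cSeq_le_sixth hL1 m
  have hcy := cSeq_nonneg hL1 m'
  have hcy6 := cSeq_le_sixth hL1 m'
  rw [rho_eval hx, rho_eval hy, ← hm, ← hm']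
  rcases Nat.eq_or_lt_of_le hmm' with he | hlt
  · rw [← he]
    constructor
    · nlinarith
    · nlinarith
  · -- m + 1 ≤ m'
    have hm1 : (m:ℝ) + 1 ≤ (m':ℝ) := by exact_mod_cast hlt
    have hstep : aSeq Lb (m+1) = aSeq Lb m + cSeq Lb m := aSeq_succ Lb m
    have hdiff : aSeq Lb m' - aSeq Lb (m+1) ≤ ((m':ℝ) - (m+1:ℕ))/6 := aSeq_diff hL1 hlt
    have hmono : aSeq Lb (m+1) ≤ aSeq Lb m' := aSeq_mono hL1 hlt
    push_cast at hdiff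
    constructor
    · nlinarith
    · nlinarith

lemma rho_monotone (hL1 : ∀ m, 1 ≤ Lb m) : Monotone (rho Lb) := by
  intro x y hxy
  rw [rho_clamp, rho_clamp (x := y)]
  exact (rho_mono_lip hL1 (le_max_right x 0) (max_le_max hxy le_rfl)).1

lemma rho_lip (hL1 : ∀ m, 1 ≤ Lb m) (x y : ℝ) : |rho Lb x - rho Lb y| ≤ |x - y| := by
  wlog h : x ≤ y generalizing x y
  · rw [abs_sub_comm, abs_sub_comm x y]; exact this y x (le_of_lt (not_le.mp h))
  rw [rho_clamp, rho_clamp (x := y)]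
  have h1 := rho_mono_lip hL1 (le_max_right x 0) (max_le_max h (le_refl (0:ℝ)))
  have h2 : max y 0 - max x 0 ≤ |x - y| := by
    rw [abs_sub_comm]
    rcases le_total y 0 with hy | hy
    · rw [max_eq_right hy]
      rcases le_total x 0 with hx | hx
      · rw [max_eq_right hx]; simp [abs_nonneg]
      · rw [max_eq_left hx]; rw [abs_of_nonneg (by linarith)]; linarith
    · rw [max_eq_left hy]
      rcases le_total x 0 with hx | hx
      · rw [max_eq_right hx]; rw [abs_of_nonneg (by linarith)]; linarith
      · rw [max_eq_left hx]; rw [abs_of_nonneg (by linarith)]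
  rw [abs_sub_comm, abs_of_nonneg (by linarith [h1.1])]
  linarith [h1.2, abs_nonneg (x - y)]

lemma rho_cont (hL1 : ∀ m, 1 ≤ Lb m) : Continuous (rho Lb) := by
  have : LipschitzWith 1 (rho Lb) := by
    apply LipschitzWith.of_dist_le_mul
    intro x y
    rw [Real.dist_eq, Real.dist_eq]
    simpa using rho_lip hL1 x y
  exact this.continuous

lemma cSeq_zero_eq (hL1 : ∀ m, 1 ≤ Lb m) : cSeq Lb 0 = 0 := by
  unfold cSeq cVal
  rw [if_neg]
  rw [aSeq_zero]
  push_neg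
  have := hL1 (⌈(0:ℝ)⌉₊ + 4)
  simp only [Nat.cast_zero]
  nlinarith

lemma rho_zero_band (hL1 : ∀ m, 1 ≤ Lb m) {x : ℝ} (h1 : 0 ≤ x) (h2 : x ≤ 1) :
    rho Lb x = 0 := by
  have := rho_band (Lb := Lb) (n := 0) (by exact_mod_cast h1) (by push_cast; linarith)
  rw [this, aSeq_zero, cSeq_zero_eq hL1]
  ring

def vec2 (A B : ℝ) : EuclideanSpace ℝ (Fin 2) := WithLp.toLp 2 ![A, B]

@[simp] lemma vec2_zero (A B : ℝ) : vec2 A B 0 = A := rfl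
@[simp] lemma vec2_one (A B : ℝ) : vec2 A B 1 = B := rfl

lemma dist2 (u v : EuclideanSpace ℝ (Fin 2)) :
    dist u v = Real.sqrt ((u 0 - v 0)^2 + (u 1 - v 1)^2) := by
  rw [EuclideanSpace.dist_eq]
  simp [Fin.sum_univ_two, Real.dist_eq, sq_abs]

lemma coord0_le_dist (u v : EuclideanSpace ℝ (Fin 2)) : |u 0 - v 0| ≤ dist u v := by
  rw [dist2, ← Real.sqrt_sq_eq_abs]
  apply Real.sqrt_le_sqrt; nlinarith [sq_nonneg (u 1 - v 1)]

lemma coord1_le_dist (u v : EuclideanSpace ℝ (Fin 2)) : |u 1 - v 1| ≤ dist u v := by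
  rw [dist2, ← Real.sqrt_sq_eq_abs]
  apply Real.sqrt_le_sqrt; nlinarith [sq_nonneg (u 0 - v 0)]

lemma dist_le_abs_add (u v : EuclideanSpace ℝ (Fin 2)) :
    dist u v ≤ |u 0 - v 0| + |u 1 - v 1| := by
  rw [dist2]
  rw [show |u 0 - v 0| + |u 1 - v 1| = Real.sqrt ((|u 0 - v 0| + |u 1 - v 1|)^2) by
    rw [Real.sqrt_sq (by positivity)]]
  apply Real.sqrt_le_sqrt
  have := abs_nonneg (u 0 - v 0); have := abs_nonneg (u 1 - v 1)
  nlinarith [sq_abs (u 0 - v 0), sq_abs (u 1 - v 1)]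

lemma frac_est (x t x' t' px px' rr E : ℝ)
    (hx : 0 < x) (hx' : 0 < x') (ht0' : 0 ≤ t') (htx' : t' ≤ x')
    (hp0 : 0 ≤ px) (hpr : px ≤ rr * x)
    (hdp : |px - px'| ≤ E) :
    |t*px/x - t'*px'/x'| ≤ rr*|t-t'| + rr*|x-x'| + E := by
  have key : t*px/x - t'*px'/x'
      = ((t-t')*px*x' + t'*px*(x'-x) + t'*x*(px-px')) / (x*x') := by
    field_simp; ring
  rw [key, abs_div, abs_of_pos (mul_pos hx hx'), div_le_iff₀ (mul_pos hx hx')]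
  have hA : |(t-t')*px*x'| ≤ |t-t'| * (rr*x) * x' := by
    rw [abs_mul, abs_mul, abs_of_nonneg hp0, abs_of_nonneg (le_of_lt hx')]
    have := mul_le_mul_of_nonneg_right (mul_le_mul_of_nonneg_left hpr (abs_nonneg (t-t'))) (le_of_lt hx')
    linarith
  have hB : |t'*px*(x'-x)| ≤ x' * (rr*x) * |x-x'| := by
    rw [abs_mul, abs_mul, abs_of_nonneg ht0', abs_of_nonneg hp0, abs_sub_comm]
    have h := mul_le_mul htx' hpr hp0 (le_of_lt hx')
    exact mul_le_mul_of_nonneg_right h (abs_nonneg _)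
  have hC : |t'*x*(px-px')| ≤ x' * x * E := by
    rw [abs_mul, abs_mul, abs_of_nonneg ht0', abs_of_nonneg (le_of_lt hx)]
    exact mul_le_mul (mul_le_mul_of_nonneg_right htx' (le_of_lt hx)) hdp (abs_nonneg _)
      (by positivity)
  have htri : |(t-t')*px*x' + t'*px*(x'-x) + t'*x*(px-px')|
      ≤ |(t-t')*px*x'| + |t'*px*(x'-x)| + |t'*x*(px-px')| :=
    le_trans (abs_add_le _ _) (by linarith [abs_add_le ((t-t')*px*x') (t'*px*(x'-x))])
  nlinarith [abs_nonneg (t-t'), abs_nonneg (x-x')]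

lemma frac_est_all (x t x' t' px px' E : ℝ)
    (hx : 0 ≤ x) (hx' : 0 ≤ x')
    (ht0 : 0 ≤ t) (htx : t ≤ x) (ht0' : 0 ≤ t') (htx' : t' ≤ x')
    (hp0 : 0 ≤ px) (hpx : px ≤ x) (hp0' : 0 ≤ px') (hpx' : px' ≤ x')
    (hdp : |px - px'| ≤ E) :
    |t*px/x - t'*px'/x'| ≤ |t-t'| + |x-x'| + E := by
  have hE : 0 ≤ E := le_trans (abs_nonneg _) hdp
  rcases eq_or_lt_of_le hx with h0 | h0
  · -- x = 0, so t = 0, px = 0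
    have ht : t = 0 := le_antisymm (h0 ▸ htx) ht0
    have hpz : px = 0 := le_antisymm (h0 ▸ hpx) hp0
    have h1 : |t*px/x - t'*px'/x'| = t'*px'/x' := by
      rw [ht, hpz]
      simp [abs_of_nonneg (div_nonneg (mul_nonneg ht0' hp0') hx')]
    rw [h1]
    have h2 : t'*px'/x' ≤ px' := by
      rcases eq_or_lt_of_le hx' with h0' | h0'
      · have : px' = 0 := le_antisymm (h0' ▸ hpx') hp0'
        rw [this]; simp
      · rw [div_le_iff₀ h0']; nlinarith
    have h3 : px' ≤ E := by
      have := hdp; rw [hpz] at this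
      calc px' = |0 - px'| := by rw [abs_sub_comm]; rw [sub_zero, abs_of_nonneg hp0']
        _ ≤ E := this
    have := abs_nonneg (t - t'); have := abs_nonneg (x - x')
    linarith
  rcases eq_or_lt_of_le hx' with h0' | h0'
  · have ht' : t' = 0 := le_antisymm (h0' ▸ htx') ht0'
    have hpz' : px' = 0 := le_antisymm (h0' ▸ hpx') hp0'
    have h1 : |t*px/x - t'*px'/x'| = t*px/x := by
      rw [ht', hpz']
      simp [abs_of_nonneg (div_nonneg (mul_nonneg ht0 hp0) hx)]
    rw [h1]
    have h2 : t*px/x ≤ px := by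
      rw [div_le_iff₀ h0]; nlinarith
    have h3 : px ≤ E := by
      calc px = |px - px'| := by rw [hpz', sub_zero, abs_of_nonneg hp0]
        _ ≤ E := hdp
    have := abs_nonneg (t - t'); have := abs_nonneg (x - x')
    linarith
  · have := frac_est x t x' t' px px' 1 E h0 h0' ht0' htx' hp0 (by linarith) hdp
    linarith

lemma seg_dists (q q' : EuclideanSpace ℝ (Fin 2)) (θ : ℝ) (h0 : 0 ≤ θ) (h1 : θ ≤ 1) :
    dist q (vec2 (q 0 + θ*(q' 0 - q 0)) (q 1 + θ*(q' 1 - q 1)))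
      + dist (vec2 (q 0 + θ*(q' 0 - q 0)) (q 1 + θ*(q' 1 - q 1))) q' = dist q q' := by
  rw [dist2, dist2, dist2]
  simp only [vec2_zero, vec2_one]
  have e1 : (q 0 - (q 0 + θ*(q' 0 - q 0)))^2 + (q 1 - (q 1 + θ*(q' 1 - q 1)))^2
      = θ^2 * ((q 0 - q' 0)^2 + (q 1 - q' 1)^2) := by ring
  have e2 : (q 0 + θ*(q' 0 - q 0) - q' 0)^2 + (q 1 + θ*(q' 1 - q 1) - q' 1)^2
      = (1-θ)^2 * ((q 0 - q' 0)^2 + (q 1 - q' 1)^2) := by ring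
  rw [e1, e2, Real.sqrt_mul (sq_nonneg θ), Real.sqrt_mul (sq_nonneg (1-θ)),
    Real.sqrt_sq h0, Real.sqrt_sq (by linarith)]
  ring

lemma sqrt_sq_add_sq_le (a b : ℝ) : Real.sqrt (a^2+b^2) ≤ |a| + |b| := by
  rw [show |a| + |b| = Real.sqrt ((|a| + |b|)^2) by rw [Real.sqrt_sq (by positivity)]]
  apply Real.sqrt_le_sqrt
  have := abs_nonneg a; have := abs_nonneg b
  nlinarith [sq_abs a, sq_abs b]

lemma abs_le_sqrt_left (a b : ℝ) : |a| ≤ Real.sqrt (a^2+b^2) := by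
  rw [← Real.sqrt_sq_eq_abs]
  apply Real.sqrt_le_sqrt; nlinarith [sq_nonneg b]

lemma abs_le_sqrt_right (a b : ℝ) : |b| ≤ Real.sqrt (a^2+b^2) := by
  rw [← Real.sqrt_sq_eq_abs]
  apply Real.sqrt_le_sqrt; nlinarith [sq_nonneg a]

lemma cyl_dist {X : Type*} [MetricSpace X] (p : X → ℝ) (w w' : Cyl p) :
    dist w w' = Real.sqrt (dist w.1.ofLp.1 w'.1.ofLp.1 ^ 2 + |w.1.ofLp.2 - w'.1.ofLp.2| ^ 2) := by
  have h : dist w w' = dist w.1 w'.1 := rfl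
  rw [h, WithLp.prod_dist_eq_add (by norm_num : 0 < (2 : ENNReal).toReal)]
  simp only [ENNReal.toReal_ofNat, Real.dist_eq, Real.sqrt_eq_rpow]
  rw [← Real.rpow_natCast (dist w.1.ofLp.1 w'.1.ofLp.1) 2, ← Real.rpow_natCast |w.1.ofLp.2 - w'.1.ofLp.2| 2]
  norm_num

lemma cyl_fst_le {X : Type*} [MetricSpace X] (p : X → ℝ) (w w' : Cyl p) :
    dist w.1.ofLp.1 w'.1.ofLp.1 ≤ dist w w' := by
  rw [cyl_dist]
  have := abs_le_sqrt_left (dist w.1.ofLp.1 w'.1.ofLp.1) (|w.1.ofLp.2 - w'.1.ofLp.2|)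
  rwa [abs_of_nonneg dist_nonneg] at this

lemma cyl_snd_le {X : Type*} [MetricSpace X] (p : X → ℝ) (w w' : Cyl p) :
    |w.1.ofLp.2 - w'.1.ofLp.2| ≤ dist w w' := by
  rw [cyl_dist]
  have := abs_le_sqrt_right (dist w.1.ofLp.1 w'.1.ofLp.1) (|w.1.ofLp.2 - w'.1.ofLp.2|)
  rwa [abs_abs] at this

lemma cyl_dist_le {X : Type*} [MetricSpace X] (p : X → ℝ) (w w' : Cyl p) :
    dist w w' ≤ dist w.1.ofLp.1 w'.1.ofLp.1 + |w.1.ofLp.2 - w'.1.ofLp.2| := by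
  rw [cyl_dist]
  refine le_trans (sqrt_sq_add_sq_le _ _) ?_
  rw [abs_of_nonneg dist_nonneg, abs_abs]

end Repar

/-- If `f : c([0,1]) → Y` is Lipschitz on each bounded region (with
constant `L_K` on the region of points with coordinates in `[0,K]`), then there is a
monotone surjective `ρ : [0,∞) → [0,∞)` such that the reparametrization
`g(x,t) = (ρ(x), t·ρ(x)/x)` is a coarse self-map of `c([0,1])` with `f ∘ g`
`1`-Lipschitz and `g` coarsely homotopic to the identity. -/
theorem reparametrize_to_lipschitz {Y : Type*} [MetricSpace Y] (f : c01 → Y)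
    (hf : ∀ K : ℝ, 0 < K → ∃ L : ℝ, 0 < L ∧ ∀ q q' : c01,
      (q : EuclideanSpace ℝ (Fin 2)) 0 ≤ K → (q' : EuclideanSpace ℝ (Fin 2)) 0 ≤ K →
      dist (f q) (f q') ≤ L * dist q q') :
    ∃ ρ : ℝ → ℝ, Monotone ρ ∧ (∀ x : ℝ, 0 ≤ x → 0 ≤ ρ x) ∧
      (∀ y : ℝ, 0 ≤ y → ∃ x : ℝ, 0 ≤ x ∧ ρ x = y) ∧
      ∃ g : c01 → c01,
        (∀ q : c01, ((g q : EuclideanSpace ℝ (Fin 2)) 0 = ρ ((q : EuclideanSpace ℝ (Fin 2)) 0)) ∧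
          ((g q : EuclideanSpace ℝ (Fin 2)) 1 =
            (q : EuclideanSpace ℝ (Fin 2)) 1 * ρ ((q : EuclideanSpace ℝ (Fin 2)) 0) /
              (q : EuclideanSpace ℝ (Fin 2)) 0)) ∧
        CoarseMap g ∧ LipschitzWith 1 (f ∘ g) ∧
        ∃ p : c01 → ℝ, ∃ hp : ∀ q, -1 ≤ p q, CoarseMap p ∧
          ∃ H : Cyl p → c01, CoarseMap H ∧
            (∀ q : c01, H (cylI0 hp q) = q) ∧ (∀ q : c01, H (cylI1 hp q) = g q) := by
  classical
  -- monotone Lipschitz constants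
  have hfc : ∀ m : ℕ, ∃ L : ℝ, 0 < L ∧ ∀ q q' : c01,
      (q : EuclideanSpace ℝ (Fin 2)) 0 ≤ (m:ℝ) → (q' : EuclideanSpace ℝ (Fin 2)) 0 ≤ (m:ℝ) →
      dist (f q) (f q') ≤ L * dist q q' := by
    intro m
    obtain ⟨L, hL, h⟩ := hf ((m:ℝ)+1) (by positivity)
    exact ⟨L, hL, fun q q' h1 h2 => h q q' (by linarith) (by linarith)⟩
  choose L0 hL0pos hL0 using hfc
  set Lb := Repar.monoMax L0 with hLbdef
  have hL1 : ∀ m, 1 ≤ Lb m := Repar.one_le_monoMax L0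
  have hLm : Monotone Lb := Repar.monoMax_mono L0
  have Hm : ∀ m : ℕ, ∀ q q' : c01,
      (q : EuclideanSpace ℝ (Fin 2)) 0 ≤ (m:ℝ) → (q' : EuclideanSpace ℝ (Fin 2)) 0 ≤ (m:ℝ) →
      dist (f q) (f q') ≤ Lb m * dist q q' := by
    intro m q q' h1 h2
    refine le_trans (hL0 m q q' h1 h2) ?_
    exact mul_le_mul_of_nonneg_right (Repar.le_monoMax L0 m) dist_nonneg
  -- basic coordinate facts
  have qx0 : ∀ q : c01, 0 ≤ (q : EuclideanSpace ℝ (Fin 2)) 0 :=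
    fun q => le_trans q.2.1 q.2.2
  have qt0 : ∀ q : c01, 0 ≤ (q : EuclideanSpace ℝ (Fin 2)) 1 := fun q => q.2.1
  have qtx : ∀ q : c01, (q : EuclideanSpace ℝ (Fin 2)) 1 ≤ (q : EuclideanSpace ℝ (Fin 2)) 0 :=
    fun q => q.2.2
  have hOmem : Repar.vec2 0 0 ∈ c01 := ⟨le_refl 0, le_refl 0⟩
  set Opt : c01 := ⟨Repar.vec2 0 0, hOmem⟩ with hOptdef
  refine ⟨Repar.rho Lb, Repar.rho_monotone hL1, fun x _ => Repar.rho_nonneg hL1 x, ?_, ?_⟩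
  · -- surjectivity
    intro y hy
    obtain ⟨N, hN⟩ := Repar.aSeq_unbounded hL1 hLm y
    have h0 : Repar.rho Lb 0 = 0 := by
      have := Repar.rho_nat (Lb := Lb) 0
      simpa [Repar.aSeq_zero] using this
    have hmem : y ∈ Set.Icc (Repar.rho Lb 0) (Repar.rho Lb N) := by
      constructor
      · rw [h0]; exact hy
      · rw [Repar.rho_nat]; exact hN
    have := intermediate_value_Icc (by positivity : (0:ℝ) ≤ (N:ℝ))
      ((Repar.rho_cont hL1).continuousOn)
    obtain ⟨x, hx, hxy⟩ := this hmem
    exact ⟨x, hx.1, hxy⟩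
  · -- the map g
    have memg : ∀ q : c01, Repar.vec2 (Repar.rho Lb ((q : EuclideanSpace ℝ (Fin 2)) 0))
        ((q : EuclideanSpace ℝ (Fin 2)) 1 * Repar.rho Lb ((q : EuclideanSpace ℝ (Fin 2)) 0) /
          (q : EuclideanSpace ℝ (Fin 2)) 0) ∈ c01 := by
      intro q
      set x := (q : EuclideanSpace ℝ (Fin 2)) 0
      set t := (q : EuclideanSpace ℝ (Fin 2)) 1
      have hx0 : 0 ≤ x := qx0 q
      have ht0 : 0 ≤ t := qt0 q
      have htx : t ≤ x := qtx q
      have hρ0 : 0 ≤ Repar.rho Lb x := Repar.rho_nonneg hL1 x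
      constructor
      · show 0 ≤ t * Repar.rho Lb x / x
        positivity
      · show t * Repar.rho Lb x / x ≤ Repar.rho Lb x
        rcases eq_or_lt_of_le hx0 with h | h
        · rw [← h]; simp only [div_zero]; exact Repar.rho_nonneg hL1 0
        · rw [div_le_iff₀ h]; nlinarith
    set g : c01 → c01 := fun q =>
      ⟨Repar.vec2 (Repar.rho Lb ((q : EuclideanSpace ℝ (Fin 2)) 0))
        ((q : EuclideanSpace ℝ (Fin 2)) 1 * Repar.rho Lb ((q : EuclideanSpace ℝ (Fin 2)) 0) /
          (q : EuclideanSpace ℝ (Fin 2)) 0), memg q⟩ with hgdef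
    have gspec0 : ∀ q : c01, (g q : EuclideanSpace ℝ (Fin 2)) 0
        = Repar.rho Lb ((q : EuclideanSpace ℝ (Fin 2)) 0) := fun q => rfl
    have gspec1 : ∀ q : c01, (g q : EuclideanSpace ℝ (Fin 2)) 1
        = (q : EuclideanSpace ℝ (Fin 2)) 1 * Repar.rho Lb ((q : EuclideanSpace ℝ (Fin 2)) 0) /
          (q : EuclideanSpace ℝ (Fin 2)) 0 := fun q => rfl
    refine ⟨g, fun q => ⟨gspec0 q, gspec1 q⟩, ?_, ?_, ?_⟩
    · -- CoarseMap g
      constructor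
      · -- bornologous
        refine ⟨fun d => 4*d, ?_⟩
        intro q q'
        have hsub : dist (g q) (g q')
            = dist ((g q) : EuclideanSpace ℝ (Fin 2)) ((g q') : EuclideanSpace ℝ (Fin 2)) := rfl
        have hsub' : dist q q'
            = dist (q : EuclideanSpace ℝ (Fin 2)) (q' : EuclideanSpace ℝ (Fin 2)) := rfl
        rw [hsub, hsub']
        refine le_trans (Repar.dist_le_abs_add _ _) ?_
        rw [gspec0 q, gspec0 q', gspec1 q, gspec1 q']
        set x := (q : EuclideanSpace ℝ (Fin 2)) 0
        set t := (q : EuclideanSpace ℝ (Fin 2)) 1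
        set x' := (q' : EuclideanSpace ℝ (Fin 2)) 0
        set t' := (q' : EuclideanSpace ℝ (Fin 2)) 1
        have hlip := Repar.rho_lip hL1 x x'
        have h2 := Repar.frac_est_all x t x' t' (Repar.rho Lb x) (Repar.rho Lb x') (|x - x'|)
          (qx0 q) (qx0 q') (qt0 q) (qtx q) (qt0 q') (qtx q')
          (Repar.rho_nonneg hL1 x) (Repar.rho_le_self hL1 (qx0 q))
          (Repar.rho_nonneg hL1 x') (Repar.rho_le_self hL1 (qx0 q')) hlip
        have hdx : |x - x'| ≤ dist (q : EuclideanSpace ℝ (Fin 2)) (q' : EuclideanSpace ℝ (Fin 2)) :=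
          Repar.coord0_le_dist _ _
        have hdt : |t - t'| ≤ dist (q : EuclideanSpace ℝ (Fin 2)) (q' : EuclideanSpace ℝ (Fin 2)) :=
          Repar.coord1_le_dist _ _
        have habs : |Repar.rho Lb x - Repar.rho Lb x'| ≤ |x - x'| := hlip
        linarith
      · -- proper
        intro B hB
        obtain ⟨r, hr⟩ := hB.subset_closedBall Opt
        obtain ⟨N, hN⟩ := Repar.aSeq_unbounded hL1 hLm (max r 0 + 1)
        have key : ∀ z : c01, z ∈ g ⁻¹' B → (z : EuclideanSpace ℝ (Fin 2)) 0 ≤ (N:ℝ) := by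
          intro z hz
          have h1 : dist (g z) Opt ≤ r := hr hz
          have h2 : |Repar.rho Lb ((z : EuclideanSpace ℝ (Fin 2)) 0) - (Opt : EuclideanSpace ℝ (Fin 2)) 0|
              ≤ dist ((g z) : EuclideanSpace ℝ (Fin 2)) ((Opt : EuclideanSpace ℝ (Fin 2))) := by
            have := Repar.coord0_le_dist ((g z) : EuclideanSpace ℝ (Fin 2)) (Opt : EuclideanSpace ℝ (Fin 2))
            rw [gspec0 z] at this
            exact this
          have hO0 : (Opt : EuclideanSpace ℝ (Fin 2)) 0 = 0 := rfl
          rw [hO0, sub_zero, abs_of_nonneg (Repar.rho_nonneg hL1 _)] at h2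
          have h3 : Repar.rho Lb ((z : EuclideanSpace ℝ (Fin 2)) 0) ≤ r := le_trans h2 h1
          by_contra hcon
          push_neg at hcon
          have h4 : Repar.rho Lb (N:ℝ) ≤ Repar.rho Lb ((z : EuclideanSpace ℝ (Fin 2)) 0) :=
            Repar.rho_monotone hL1 (le_of_lt hcon)
          rw [Repar.rho_nat] at h4
          have : max r 0 + 1 ≤ r := by linarith
          have := le_max_left r 0
          linarith
        refine Metric.isBounded_iff.mpr ⟨4*(N:ℝ), ?_⟩
        intro q hq q' hq'
        have hx := key q hq
        have hx' := key q' hq'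
        have h1 : dist q q'
            = dist (q : EuclideanSpace ℝ (Fin 2)) (q' : EuclideanSpace ℝ (Fin 2)) := rfl
        rw [h1]
        refine le_trans (Repar.dist_le_abs_add _ _) ?_
        have b1 : |(q : EuclideanSpace ℝ (Fin 2)) 0 - (q' : EuclideanSpace ℝ (Fin 2)) 0| ≤ (N:ℝ) := by
          rw [abs_sub_le_iff]
          constructor <;> [linarith [qx0 q']; linarith [qx0 q]]
        have b2 : |(q : EuclideanSpace ℝ (Fin 2)) 1 - (q' : EuclideanSpace ℝ (Fin 2)) 1| ≤ (N:ℝ) := by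
          rw [abs_sub_le_iff]
          constructor
          · linarith [qt0 q', qtx q, qx0 q]
          · linarith [qt0 q, qtx q', qx0 q']
        have : (0:ℝ) ≤ (N:ℝ) := Nat.cast_nonneg N
        linarith
    · -- f ∘ g is 1-Lipschitz
      have base0 : ∀ q : c01, (q : EuclideanSpace ℝ (Fin 2)) 0 ≤ 1 → g q = Opt := by
        intro q hq
        apply Subtype.ext
        have hz : Repar.rho Lb ((q : EuclideanSpace ℝ (Fin 2)) 0) = 0 :=
          Repar.rho_zero_band hL1 (qx0 q) hq
        show Repar.vec2 _ _ = Repar.vec2 0 0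
        rw [hz]
        norm_num
      have band : ∀ n : ℕ, 1 ≤ n → ∀ q q' : c01,
          (n:ℝ) ≤ (q : EuclideanSpace ℝ (Fin 2)) 0 → (q : EuclideanSpace ℝ (Fin 2)) 0 ≤ (n:ℝ)+1 →
          (n:ℝ) ≤ (q' : EuclideanSpace ℝ (Fin 2)) 0 → (q' : EuclideanSpace ℝ (Fin 2)) 0 ≤ (n:ℝ)+1 →
          dist (f (g q)) (f (g q')) ≤ dist q q' := by
        intro n hn q q' hx1 hx2 hx1' hx2'
        have hn1 : (1:ℝ) ≤ (n:ℝ) := by exact_mod_cast hn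
        have hnpos : (0:ℝ) < (n:ℝ) := by linarith
        have hcn0 : 0 ≤ Repar.cSeq Lb n := Repar.cSeq_nonneg hL1 n
        have hsucc : Repar.aSeq Lb (n+1) = Repar.aSeq Lb n + Repar.cSeq Lb n := Repar.aSeq_succ Lb n
        have hA10 : 0 ≤ Repar.aSeq Lb (n+1) := Repar.aSeq_nonneg hL1 (n+1)
        have hρx : Repar.rho Lb ((q : EuclideanSpace ℝ (Fin 2)) 0)
            = Repar.aSeq Lb n + Repar.cSeq Lb n*((q : EuclideanSpace ℝ (Fin 2)) 0 - n) :=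
          Repar.rho_band hx1 hx2
        have hρx' : Repar.rho Lb ((q' : EuclideanSpace ℝ (Fin 2)) 0)
            = Repar.aSeq Lb n + Repar.cSeq Lb n*((q' : EuclideanSpace ℝ (Fin 2)) 0 - n) :=
          Repar.rho_band hx1' hx2'
        have hρxA : Repar.rho Lb ((q : EuclideanSpace ℝ (Fin 2)) 0) ≤ Repar.aSeq Lb (n+1) := by
          rw [hρx, hsucc]; nlinarith
        have hρxA' : Repar.rho Lb ((q' : EuclideanSpace ℝ (Fin 2)) 0) ≤ Repar.aSeq Lb (n+1) := by
          rw [hρx', hsucc]; nlinarith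
        have hA1m : Repar.aSeq Lb (n+1) ≤ ((⌈Repar.aSeq Lb (n+1)⌉₊ + 3 : ℕ) : ℝ) := by
          push_cast
          linarith [Nat.le_ceil (Repar.aSeq Lb (n+1))]
        have happ := Hm (⌈Repar.aSeq Lb (n+1)⌉₊ + 3) (g q) (g q')
          (by rw [gspec0]; exact le_trans hρxA hA1m)
          (by rw [gspec0]; exact le_trans hρxA' hA1m)
        refine le_trans happ ?_
        have hL0' : 0 < Lb (⌈Repar.aSeq Lb (n+1)⌉₊ + 3) := Repar.Lb_pos hL1 _
        have hrr0 : 0 ≤ Repar.aSeq Lb (n+1) / (n:ℝ) := div_nonneg hA10 (le_of_lt hnpos)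
        have hΔ1 : |Repar.rho Lb ((q : EuclideanSpace ℝ (Fin 2)) 0)
            - Repar.rho Lb ((q' : EuclideanSpace ℝ (Fin 2)) 0)|
            = Repar.cSeq Lb n * |(q : EuclideanSpace ℝ (Fin 2)) 0 - (q' : EuclideanSpace ℝ (Fin 2)) 0| := by
          rw [hρx, hρx']
          rw [show Repar.aSeq Lb n + Repar.cSeq Lb n*((q : EuclideanSpace ℝ (Fin 2)) 0 - n)
            - (Repar.aSeq Lb n + Repar.cSeq Lb n*((q' : EuclideanSpace ℝ (Fin 2)) 0 - n))
            = Repar.cSeq Lb n * ((q : EuclideanSpace ℝ (Fin 2)) 0 - (q' : EuclideanSpace ℝ (Fin 2)) 0) by ring]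
          rw [abs_mul, abs_of_nonneg hcn0]
        have hpr : Repar.rho Lb ((q : EuclideanSpace ℝ (Fin 2)) 0)
            ≤ (Repar.aSeq Lb (n+1) / (n:ℝ)) * (q : EuclideanSpace ℝ (Fin 2)) 0 := by
          have h1 : (Repar.aSeq Lb (n+1) / (n:ℝ)) * (n:ℝ) = Repar.aSeq Lb (n+1) :=
            div_mul_cancel₀ _ (ne_of_gt hnpos)
          have h2 : (Repar.aSeq Lb (n+1) / (n:ℝ)) * (n:ℝ)
              ≤ (Repar.aSeq Lb (n+1) / (n:ℝ)) * (q : EuclideanSpace ℝ (Fin 2)) 0 :=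
            mul_le_mul_of_nonneg_left hx1 hrr0
          linarith
        have hfr := Repar.frac_est ((q : EuclideanSpace ℝ (Fin 2)) 0) ((q : EuclideanSpace ℝ (Fin 2)) 1)
          ((q' : EuclideanSpace ℝ (Fin 2)) 0) ((q' : EuclideanSpace ℝ (Fin 2)) 1)
          (Repar.rho Lb ((q : EuclideanSpace ℝ (Fin 2)) 0)) (Repar.rho Lb ((q' : EuclideanSpace ℝ (Fin 2)) 0))
          (Repar.aSeq Lb (n+1) / (n:ℝ))
          (Repar.cSeq Lb n * |(q : EuclideanSpace ℝ (Fin 2)) 0 - (q' : EuclideanSpace ℝ (Fin 2)) 0|)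
          (by linarith) (by linarith) (qt0 q') (qtx q') (Repar.rho_nonneg hL1 _) hpr (le_of_eq hΔ1)
        have hgd : dist (g q) (g q')
            ≤ (Repar.aSeq Lb (n+1) / (n:ℝ))*|(q : EuclideanSpace ℝ (Fin 2)) 1 - (q' : EuclideanSpace ℝ (Fin 2)) 1|
            + (Repar.aSeq Lb (n+1) / (n:ℝ))*|(q : EuclideanSpace ℝ (Fin 2)) 0 - (q' : EuclideanSpace ℝ (Fin 2)) 0|
            + 2*(Repar.cSeq Lb n * |(q : EuclideanSpace ℝ (Fin 2)) 0 - (q' : EuclideanSpace ℝ (Fin 2)) 0|) := by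
          have hsub : dist (g q) (g q')
              = dist ((g q) : EuclideanSpace ℝ (Fin 2)) ((g q') : EuclideanSpace ℝ (Fin 2)) := rfl
          rw [hsub]
          refine le_trans (Repar.dist_le_abs_add _ _) ?_
          rw [gspec0 q, gspec0 q', gspec1 q, gspec1 q', hΔ1]
          linarith
        have hnum1 : Lb (⌈Repar.aSeq Lb (n+1)⌉₊ + 3) * Repar.cSeq Lb n ≤ 1/6 :=
          Repar.cSeq_mul_le hL1 hLm n
        have hnum2 : Lb (⌈Repar.aSeq Lb (n+1)⌉₊ + 3) * (Repar.aSeq Lb (n+1) / (n:ℝ)) ≤ 1/6 := by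
          have hinv := Repar.invariant hL1 hLm (n+1)
          have hmax : max (((n+1 : ℕ):ℝ) - 1) 0 = (n:ℝ) := by
            rw [max_eq_left] <;> push_cast <;> linarith
          rw [hmax] at hinv
          rw [mul_div_assoc', div_le_iff₀ hnpos]
          linarith
        have hD : dist q q'
            = dist (q : EuclideanSpace ℝ (Fin 2)) (q' : EuclideanSpace ℝ (Fin 2)) := rfl
        have hdx : |(q : EuclideanSpace ℝ (Fin 2)) 0 - (q' : EuclideanSpace ℝ (Fin 2)) 0| ≤ dist q q' := by
          rw [hD]; exact Repar.coord0_le_dist _ _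
        have hdt : |(q : EuclideanSpace ℝ (Fin 2)) 1 - (q' : EuclideanSpace ℝ (Fin 2)) 1| ≤ dist q q' := by
          rw [hD]; exact Repar.coord1_le_dist _ _
        have e1 : Lb (⌈Repar.aSeq Lb (n+1)⌉₊ + 3) * ((Repar.aSeq Lb (n+1) / (n:ℝ))
            * |(q : EuclideanSpace ℝ (Fin 2)) 1 - (q' : EuclideanSpace ℝ (Fin 2)) 1|)
            ≤ (1/6) * dist q q' := by
          rw [← mul_assoc]
          exact mul_le_mul hnum2 hdt (abs_nonneg _) (by norm_num)
        have e2 : Lb (⌈Repar.aSeq Lb (n+1)⌉₊ + 3) * ((Repar.aSeq Lb (n+1) / (n:ℝ))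
            * |(q : EuclideanSpace ℝ (Fin 2)) 0 - (q' : EuclideanSpace ℝ (Fin 2)) 0|)
            ≤ (1/6) * dist q q' := by
          rw [← mul_assoc]
          exact mul_le_mul hnum2 hdx (abs_nonneg _) (by norm_num)
        have e3 : Lb (⌈Repar.aSeq Lb (n+1)⌉₊ + 3) * (Repar.cSeq Lb n
            * |(q : EuclideanSpace ℝ (Fin 2)) 0 - (q' : EuclideanSpace ℝ (Fin 2)) 0|)
            ≤ (1/6) * dist q q' := by
          rw [← mul_assoc]
          exact mul_le_mul hnum1 hdx (abs_nonneg _) (by norm_num)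
        calc Lb (⌈Repar.aSeq Lb (n+1)⌉₊ + 3) * dist (g q) (g q')
            ≤ Lb (⌈Repar.aSeq Lb (n+1)⌉₊ + 3) *
              ((Repar.aSeq Lb (n+1) / (n:ℝ))*|(q : EuclideanSpace ℝ (Fin 2)) 1 - (q' : EuclideanSpace ℝ (Fin 2)) 1|
              + (Repar.aSeq Lb (n+1) / (n:ℝ))*|(q : EuclideanSpace ℝ (Fin 2)) 0 - (q' : EuclideanSpace ℝ (Fin 2)) 0|
              + 2*(Repar.cSeq Lb n * |(q : EuclideanSpace ℝ (Fin 2)) 0 - (q' : EuclideanSpace ℝ (Fin 2)) 0|)) :=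
              mul_le_mul_of_nonneg_left hgd (le_of_lt hL0')
          _ = Lb (⌈Repar.aSeq Lb (n+1)⌉₊ + 3) * ((Repar.aSeq Lb (n+1) / (n:ℝ))
              * |(q : EuclideanSpace ℝ (Fin 2)) 1 - (q' : EuclideanSpace ℝ (Fin 2)) 1|)
              + Lb (⌈Repar.aSeq Lb (n+1)⌉₊ + 3) * ((Repar.aSeq Lb (n+1) / (n:ℝ))
              * |(q : EuclideanSpace ℝ (Fin 2)) 0 - (q' : EuclideanSpace ℝ (Fin 2)) 0|)
              + 2*(Lb (⌈Repar.aSeq Lb (n+1)⌉₊ + 3) * (Repar.cSeq Lb n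
              * |(q : EuclideanSpace ℝ (Fin 2)) 0 - (q' : EuclideanSpace ℝ (Fin 2)) 0|)) := by ring
          _ ≤ (1/6) * dist q q' + (1/6) * dist q q' + 2*((1/6) * dist q q') := by linarith
          _ ≤ dist q q' := by linarith [dist_nonneg (x := q) (y := q')]
      have main : ∀ k : ℕ, ∀ q q' : c01,
          (q : EuclideanSpace ℝ (Fin 2)) 0 ≤ (q' : EuclideanSpace ℝ (Fin 2)) 0 →
          (q' : EuclideanSpace ℝ (Fin 2)) 0 ≤ (k:ℝ)+1 →
          dist (f (g q)) (f (g q')) ≤ dist q q' := by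
        intro k
        induction k with
        | zero =>
          intro q q' hle hub
          norm_num at hub
          rw [base0 q (le_trans hle hub), base0 q' hub]
          simpa using dist_nonneg (x := q) (y := q')
        | succ k ih =>
          intro q q' hle hub
          push_cast at hub
          by_cases h1 : (q' : EuclideanSpace ℝ (Fin 2)) 0 ≤ (k:ℝ)+1
          · exact ih q q' hle h1
          push_neg at h1
          by_cases h2 : ((k:ℝ)+1) ≤ (q : EuclideanSpace ℝ (Fin 2)) 0
          · refine band (k+1) (by omega) q q' ?_ ?_ ?_ ?_ <;> push_cast <;> linarith
          · push_neg at h2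
            have hxx' : (q : EuclideanSpace ℝ (Fin 2)) 0 < (q' : EuclideanSpace ℝ (Fin 2)) 0 :=
              lt_trans h2 h1
            have hd0 : (0:ℝ) < (q' : EuclideanSpace ℝ (Fin 2)) 0 - (q : EuclideanSpace ℝ (Fin 2)) 0 := by
              linarith
            set θ := (((k:ℝ)+1) - (q : EuclideanSpace ℝ (Fin 2)) 0)
              / ((q' : EuclideanSpace ℝ (Fin 2)) 0 - (q : EuclideanSpace ℝ (Fin 2)) 0) with hθ
            have hθ0 : 0 ≤ θ := div_nonneg (by linarith) (le_of_lt hd0)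
            have hθ1 : θ ≤ 1 := by rw [hθ, div_le_one hd0]; linarith
            have hw0 : (q : EuclideanSpace ℝ (Fin 2)) 0
                + θ*((q' : EuclideanSpace ℝ (Fin 2)) 0 - (q : EuclideanSpace ℝ (Fin 2)) 0) = (k:ℝ)+1 := by
              rw [hθ, div_mul_cancel₀ _ (ne_of_gt hd0)]; ring
            have hwmem : Repar.vec2
                ((q : EuclideanSpace ℝ (Fin 2)) 0 + θ*((q' : EuclideanSpace ℝ (Fin 2)) 0 - (q : EuclideanSpace ℝ (Fin 2)) 0))
                ((q : EuclideanSpace ℝ (Fin 2)) 1 + θ*((q' : EuclideanSpace ℝ (Fin 2)) 1 - (q : EuclideanSpace ℝ (Fin 2)) 1))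
                ∈ c01 := by
              constructor
              · show (0:ℝ) ≤ (q : EuclideanSpace ℝ (Fin 2)) 1
                  + θ*((q' : EuclideanSpace ℝ (Fin 2)) 1 - (q : EuclideanSpace ℝ (Fin 2)) 1)
                nlinarith [qt0 q, qt0 q']
              · show (q : EuclideanSpace ℝ (Fin 2)) 1
                  + θ*((q' : EuclideanSpace ℝ (Fin 2)) 1 - (q : EuclideanSpace ℝ (Fin 2)) 1)
                  ≤ (q : EuclideanSpace ℝ (Fin 2)) 0
                  + θ*((q' : EuclideanSpace ℝ (Fin 2)) 0 - (q : EuclideanSpace ℝ (Fin 2)) 0)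
                nlinarith [qtx q, qtx q']
            set w : c01 := ⟨Repar.vec2
                ((q : EuclideanSpace ℝ (Fin 2)) 0 + θ*((q' : EuclideanSpace ℝ (Fin 2)) 0 - (q : EuclideanSpace ℝ (Fin 2)) 0))
                ((q : EuclideanSpace ℝ (Fin 2)) 1 + θ*((q' : EuclideanSpace ℝ (Fin 2)) 1 - (q : EuclideanSpace ℝ (Fin 2)) 1)),
                hwmem⟩ with hwdef
            have hwc0 : (w : EuclideanSpace ℝ (Fin 2)) 0
                = (q : EuclideanSpace ℝ (Fin 2)) 0
                  + θ*((q' : EuclideanSpace ℝ (Fin 2)) 0 - (q : EuclideanSpace ℝ (Fin 2)) 0) := rfl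
            have hseg := Repar.seg_dists (q : EuclideanSpace ℝ (Fin 2)) (q' : EuclideanSpace ℝ (Fin 2)) θ hθ0 hθ1
            have hqw : dist q w = dist (q : EuclideanSpace ℝ (Fin 2)) (w : EuclideanSpace ℝ (Fin 2)) := rfl
            have hwq' : dist w q' = dist (w : EuclideanSpace ℝ (Fin 2)) (q' : EuclideanSpace ℝ (Fin 2)) := rfl
            have hD : dist q q' = dist (q : EuclideanSpace ℝ (Fin 2)) (q' : EuclideanSpace ℝ (Fin 2)) := rfl
            have step1 : dist (f (g q)) (f (g w)) ≤ dist q w := by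
              refine ih q w ?_ ?_
              · rw [hwc0, hw0]; linarith
              · rw [hwc0, hw0]
            have step2 : dist (f (g w)) (f (g q')) ≤ dist w q' := by
              refine band (k+1) (by omega) w q' ?_ ?_ ?_ ?_
              · rw [hwc0, hw0]; push_cast; linarith
              · rw [hwc0, hw0]; push_cast; linarith
              · push_cast; linarith
              · push_cast; linarith
            calc dist (f (g q)) (f (g q'))
                ≤ dist (f (g q)) (f (g w)) + dist (f (g w)) (f (g q')) := dist_triangle _ _ _
              _ ≤ dist q w + dist w q' := add_le_add step1 step2
              _ = dist q q' := by rw [hqw, hwq', hD]; exact hseg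
      refine LipschitzWith.of_dist_le_mul ?_
      intro q q'
      have h1 : ((1 : NNReal) : ℝ) * dist q q' = dist q q' := by norm_num
      rw [h1]
      show dist (f (g q)) (f (g q')) ≤ dist q q'
      rcases le_total ((q : EuclideanSpace ℝ (Fin 2)) 0) ((q' : EuclideanSpace ℝ (Fin 2)) 0) with h | h
      · exact main ⌈(q' : EuclideanSpace ℝ (Fin 2)) 0⌉₊ q q' h
          (le_trans (Nat.le_ceil _) (by linarith))
      · rw [dist_comm, dist_comm q q']
        exact main ⌈(q : EuclideanSpace ℝ (Fin 2)) 0⌉₊ q' q h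
          (le_trans (Nat.le_ceil _) (by linarith))
    · -- coarse homotopy to the identity
      set p : c01 → ℝ := fun q =>
        (q : EuclideanSpace ℝ (Fin 2)) 0 - Repar.rho Lb ((q : EuclideanSpace ℝ (Fin 2)) 0) with hpdef
      have hpq : ∀ q : c01, p q
          = (q : EuclideanSpace ℝ (Fin 2)) 0 - Repar.rho Lb ((q : EuclideanSpace ℝ (Fin 2)) 0) :=
        fun q => rfl
      have hp0 : ∀ q : c01, 0 ≤ p q := by
        intro q; rw [hpq]; linarith [Repar.rho_le_self hL1 (qx0 q)]
      have hp : ∀ q : c01, -1 ≤ p q := fun q => le_trans (by norm_num) (hp0 q)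
      refine ⟨p, hp, ?_, ?_⟩
      · -- CoarseMap p
        constructor
        · refine ⟨fun d => 2*d, ?_⟩
          intro q q'
          show dist (p q) (p q') ≤ 2 * dist q q'
          rw [Real.dist_eq, hpq, hpq]
          have hl := Repar.rho_lip hL1 ((q : EuclideanSpace ℝ (Fin 2)) 0) ((q' : EuclideanSpace ℝ (Fin 2)) 0)
          have hD : dist q q' = dist (q : EuclideanSpace ℝ (Fin 2)) (q' : EuclideanSpace ℝ (Fin 2)) := rfl
          have hdx : |(q : EuclideanSpace ℝ (Fin 2)) 0 - (q' : EuclideanSpace ℝ (Fin 2)) 0| ≤ dist q q' := by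
            rw [hD]; exact Repar.coord0_le_dist _ _
          have habs : |((q : EuclideanSpace ℝ (Fin 2)) 0 - Repar.rho Lb ((q : EuclideanSpace ℝ (Fin 2)) 0))
              - ((q' : EuclideanSpace ℝ (Fin 2)) 0 - Repar.rho Lb ((q' : EuclideanSpace ℝ (Fin 2)) 0))|
              ≤ |(q : EuclideanSpace ℝ (Fin 2)) 0 - (q' : EuclideanSpace ℝ (Fin 2)) 0|
              + |Repar.rho Lb ((q : EuclideanSpace ℝ (Fin 2)) 0) - Repar.rho Lb ((q' : EuclideanSpace ℝ (Fin 2)) 0)| := by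
            rw [show ((q : EuclideanSpace ℝ (Fin 2)) 0 - Repar.rho Lb ((q : EuclideanSpace ℝ (Fin 2)) 0))
              - ((q' : EuclideanSpace ℝ (Fin 2)) 0 - Repar.rho Lb ((q' : EuclideanSpace ℝ (Fin 2)) 0))
              = ((q : EuclideanSpace ℝ (Fin 2)) 0 - (q' : EuclideanSpace ℝ (Fin 2)) 0)
              - (Repar.rho Lb ((q : EuclideanSpace ℝ (Fin 2)) 0) - Repar.rho Lb ((q' : EuclideanSpace ℝ (Fin 2)) 0)) by ring]
            exact abs_sub _ _
          linarith
        · intro B hB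
          obtain ⟨r, hr⟩ := hB.subset_closedBall 0
          have key : ∀ z : c01, z ∈ p ⁻¹' B → (z : EuclideanSpace ℝ (Fin 2)) 0 ≤ 6*|r|+1 := by
            intro z hz
            have h1 : |p z - 0| ≤ r := by
              have := hr hz; rwa [Metric.mem_closedBall, Real.dist_eq] at this
            rw [sub_zero] at h1
            have h2 : p z ≤ |r| := le_trans (le_abs_self _) (le_trans h1 (le_abs_self r))
            have h3 : Repar.rho Lb ((z : EuclideanSpace ℝ (Fin 2)) 0) ≤ (z : EuclideanSpace ℝ (Fin 2)) 0 / 6 := by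
              have := Repar.rho_le_sixth hL1 ((z : EuclideanSpace ℝ (Fin 2)) 0)
              rwa [max_eq_left (qx0 z)] at this
            rw [hpq] at h2
            linarith [abs_nonneg r]
          refine Metric.isBounded_iff.mpr ⟨2*(6*|r|+1), ?_⟩
          intro q hq q' hq'
          have hD : dist q q' = dist (q : EuclideanSpace ℝ (Fin 2)) (q' : EuclideanSpace ℝ (Fin 2)) := rfl
          rw [hD]
          refine le_trans (Repar.dist_le_abs_add _ _) ?_
          have b1 : |(q : EuclideanSpace ℝ (Fin 2)) 0 - (q' : EuclideanSpace ℝ (Fin 2)) 0| ≤ 6*|r|+1 := by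
            rw [abs_sub_le_iff]
            constructor
            · linarith [key q hq, key q' hq', qx0 q']
            · linarith [key q hq, key q' hq', qx0 q]
          have b2 : |(q : EuclideanSpace ℝ (Fin 2)) 1 - (q' : EuclideanSpace ℝ (Fin 2)) 1| ≤ 6*|r|+1 := by
            rw [abs_sub_le_iff]
            constructor
            · linarith [key q hq, qtx q, qt0 q']
            · linarith [key q' hq', qtx q', qt0 q]
          linarith
      · -- the homotopy H
        have memH : ∀ w : Cyl p,
            Repar.vec2 (max (Repar.rho Lb ((w.1.ofLp.1 : EuclideanSpace ℝ (Fin 2)) 0)) ((w.1.ofLp.1 : EuclideanSpace ℝ (Fin 2)) 0 - w.1.ofLp.2))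
              ((w.1.ofLp.1 : EuclideanSpace ℝ (Fin 2)) 1 * (max (Repar.rho Lb ((w.1.ofLp.1 : EuclideanSpace ℝ (Fin 2)) 0)) ((w.1.ofLp.1 : EuclideanSpace ℝ (Fin 2)) 0 - w.1.ofLp.2)) / (w.1.ofLp.1 : EuclideanSpace ℝ (Fin 2)) 0) ∈ c01 := by
          intro w
          have hU0 : 0 ≤ max (Repar.rho Lb ((w.1.ofLp.1 : EuclideanSpace ℝ (Fin 2)) 0)) ((w.1.ofLp.1 : EuclideanSpace ℝ (Fin 2)) 0 - w.1.ofLp.2) :=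
            le_trans (Repar.rho_nonneg hL1 _) (le_max_left _ _)
          constructor
          · show (0:ℝ) ≤ (w.1.ofLp.1 : EuclideanSpace ℝ (Fin 2)) 1 * (max (Repar.rho Lb ((w.1.ofLp.1 : EuclideanSpace ℝ (Fin 2)) 0)) ((w.1.ofLp.1 : EuclideanSpace ℝ (Fin 2)) 0 - w.1.ofLp.2)) / (w.1.ofLp.1 : EuclideanSpace ℝ (Fin 2)) 0
            exact div_nonneg (mul_nonneg (qt0 w.1.ofLp.1) hU0) (qx0 w.1.ofLp.1)
          · show (w.1.ofLp.1 : EuclideanSpace ℝ (Fin 2)) 1 * (max (Repar.rho Lb ((w.1.ofLp.1 : EuclideanSpace ℝ (Fin 2)) 0)) ((w.1.ofLp.1 : EuclideanSpace ℝ (Fin 2)) 0 - w.1.ofLp.2)) / (w.1.ofLp.1 : EuclideanSpace ℝ (Fin 2)) 0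
              ≤ max (Repar.rho Lb ((w.1.ofLp.1 : EuclideanSpace ℝ (Fin 2)) 0)) ((w.1.ofLp.1 : EuclideanSpace ℝ (Fin 2)) 0 - w.1.ofLp.2)
            rcases eq_or_lt_of_le (qx0 w.1.ofLp.1) with h | h
            · rw [← h]; simp only [div_zero]
              exact le_trans (Repar.rho_nonneg hL1 _) (le_max_left _ _)
            · rw [div_le_iff₀ h]; nlinarith [qtx w.1.ofLp.1, hU0]
        set H : Cyl p → c01 := fun w =>
          ⟨Repar.vec2 (max (Repar.rho Lb ((w.1.ofLp.1 : EuclideanSpace ℝ (Fin 2)) 0)) ((w.1.ofLp.1 : EuclideanSpace ℝ (Fin 2)) 0 - w.1.ofLp.2))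
            ((w.1.ofLp.1 : EuclideanSpace ℝ (Fin 2)) 1 * (max (Repar.rho Lb ((w.1.ofLp.1 : EuclideanSpace ℝ (Fin 2)) 0)) ((w.1.ofLp.1 : EuclideanSpace ℝ (Fin 2)) 0 - w.1.ofLp.2)) / (w.1.ofLp.1 : EuclideanSpace ℝ (Fin 2)) 0),
            memH w⟩ with hHdef
        have Hc0 : ∀ w : Cyl p, ((H w) : EuclideanSpace ℝ (Fin 2)) 0
            = max (Repar.rho Lb ((w.1.ofLp.1 : EuclideanSpace ℝ (Fin 2)) 0)) ((w.1.ofLp.1 : EuclideanSpace ℝ (Fin 2)) 0 - w.1.ofLp.2) := fun w => rfl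
        have Hc1 : ∀ w : Cyl p, ((H w) : EuclideanSpace ℝ (Fin 2)) 1
            = (w.1.ofLp.1 : EuclideanSpace ℝ (Fin 2)) 1 * (max (Repar.rho Lb ((w.1.ofLp.1 : EuclideanSpace ℝ (Fin 2)) 0)) ((w.1.ofLp.1 : EuclideanSpace ℝ (Fin 2)) 0 - w.1.ofLp.2)) / (w.1.ofLp.1 : EuclideanSpace ℝ (Fin 2)) 0 := fun w => rfl
        have hU0 : ∀ w : Cyl p, 0 ≤ max (Repar.rho Lb ((w.1.ofLp.1 : EuclideanSpace ℝ (Fin 2)) 0)) ((w.1.ofLp.1 : EuclideanSpace ℝ (Fin 2)) 0 - w.1.ofLp.2) :=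
          fun w => le_trans (Repar.rho_nonneg hL1 _) (le_max_left _ _)
        have hUx : ∀ w : Cyl p, max (Repar.rho Lb ((w.1.ofLp.1 : EuclideanSpace ℝ (Fin 2)) 0)) ((w.1.ofLp.1 : EuclideanSpace ℝ (Fin 2)) 0 - w.1.ofLp.2)
            ≤ (w.1.ofLp.1 : EuclideanSpace ℝ (Fin 2)) 0 := by
          intro w
          apply max_le (Repar.rho_le_self hL1 (qx0 w.1.ofLp.1))
          linarith [w.2.1]
        refine ⟨H, ⟨?_, ?_⟩, ?_, ?_⟩
        · -- bornologous H
          refine ⟨fun d => 6*d, ?_⟩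
          intro w w'
          have hsub : dist (H w) (H w')
              = dist ((H w) : EuclideanSpace ℝ (Fin 2)) ((H w') : EuclideanSpace ℝ (Fin 2)) := rfl
          rw [hsub]
          refine le_trans (Repar.dist_le_abs_add _ _) ?_
          rw [Hc0 w, Hc0 w', Hc1 w, Hc1 w']
          have hΔU : |max (Repar.rho Lb ((w.1.ofLp.1 : EuclideanSpace ℝ (Fin 2)) 0)) ((w.1.ofLp.1 : EuclideanSpace ℝ (Fin 2)) 0 - w.1.ofLp.2)
              - max (Repar.rho Lb ((w'.1.ofLp.1 : EuclideanSpace ℝ (Fin 2)) 0)) ((w'.1.ofLp.1 : EuclideanSpace ℝ (Fin 2)) 0 - w'.1.ofLp.2)|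
              ≤ |(w.1.ofLp.1 : EuclideanSpace ℝ (Fin 2)) 0 - (w'.1.ofLp.1 : EuclideanSpace ℝ (Fin 2)) 0| + |w.1.ofLp.2 - w'.1.ofLp.2| := by
            refine le_trans (abs_max_sub_max_le_max _ _ _ _) ?_
            apply max_le
            · exact le_trans (Repar.rho_lip hL1 _ _) (by linarith [abs_nonneg (w.1.ofLp.2 - w'.1.ofLp.2)])
            · rw [show ((w.1.ofLp.1 : EuclideanSpace ℝ (Fin 2)) 0 - w.1.ofLp.2) - ((w'.1.ofLp.1 : EuclideanSpace ℝ (Fin 2)) 0 - w'.1.ofLp.2)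
                = ((w.1.ofLp.1 : EuclideanSpace ℝ (Fin 2)) 0 - (w'.1.ofLp.1 : EuclideanSpace ℝ (Fin 2)) 0) - (w.1.ofLp.2 - w'.1.ofLp.2) by ring]
              exact abs_sub _ _
          have hfr := Repar.frac_est_all ((w.1.ofLp.1 : EuclideanSpace ℝ (Fin 2)) 0) ((w.1.ofLp.1 : EuclideanSpace ℝ (Fin 2)) 1)
            ((w'.1.ofLp.1 : EuclideanSpace ℝ (Fin 2)) 0) ((w'.1.ofLp.1 : EuclideanSpace ℝ (Fin 2)) 1)
            (max (Repar.rho Lb ((w.1.ofLp.1 : EuclideanSpace ℝ (Fin 2)) 0)) ((w.1.ofLp.1 : EuclideanSpace ℝ (Fin 2)) 0 - w.1.ofLp.2))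
            (max (Repar.rho Lb ((w'.1.ofLp.1 : EuclideanSpace ℝ (Fin 2)) 0)) ((w'.1.ofLp.1 : EuclideanSpace ℝ (Fin 2)) 0 - w'.1.ofLp.2))
            (|(w.1.ofLp.1 : EuclideanSpace ℝ (Fin 2)) 0 - (w'.1.ofLp.1 : EuclideanSpace ℝ (Fin 2)) 0| + |w.1.ofLp.2 - w'.1.ofLp.2|)
            (qx0 w.1.ofLp.1) (qx0 w'.1.ofLp.1) (qt0 w.1.ofLp.1) (qtx w.1.ofLp.1) (qt0 w'.1.ofLp.1) (qtx w'.1.ofLp.1)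
            (hU0 w) (hUx w) (hU0 w') (hUx w') hΔU
          have hd1 : |(w.1.ofLp.1 : EuclideanSpace ℝ (Fin 2)) 0 - (w'.1.ofLp.1 : EuclideanSpace ℝ (Fin 2)) 0| ≤ dist w w' := by
            refine le_trans ?_ (Repar.cyl_fst_le p w w')
            exact Repar.coord0_le_dist _ _
          have hd2 : |(w.1.ofLp.1 : EuclideanSpace ℝ (Fin 2)) 1 - (w'.1.ofLp.1 : EuclideanSpace ℝ (Fin 2)) 1| ≤ dist w w' := by
            refine le_trans ?_ (Repar.cyl_fst_le p w w')
            exact Repar.coord1_le_dist _ _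
          have hd3 : |w.1.ofLp.2 - w'.1.ofLp.2| ≤ dist w w' := Repar.cyl_snd_le p w w'
          linarith
        · -- proper H
          intro B hB
          obtain ⟨r, hr⟩ := hB.subset_closedBall Opt
          obtain ⟨N, hN⟩ := Repar.aSeq_unbounded hL1 hLm (max r 0 + 1)
          have keyx : ∀ w : Cyl p, w ∈ H ⁻¹' B → (w.1.ofLp.1 : EuclideanSpace ℝ (Fin 2)) 0 ≤ (N:ℝ) := by
            intro w hw
            have h1 : dist (H w) Opt ≤ r := hr hw
            have h2 : |((H w) : EuclideanSpace ℝ (Fin 2)) 0 - (Opt : EuclideanSpace ℝ (Fin 2)) 0|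
                ≤ dist ((H w) : EuclideanSpace ℝ (Fin 2)) ((Opt : EuclideanSpace ℝ (Fin 2))) :=
              Repar.coord0_le_dist _ _
            have hO0 : (Opt : EuclideanSpace ℝ (Fin 2)) 0 = 0 := rfl
            rw [Hc0 w, hO0, sub_zero, abs_of_nonneg (hU0 w)] at h2
            have h3 : Repar.rho Lb ((w.1.ofLp.1 : EuclideanSpace ℝ (Fin 2)) 0) ≤ r := by
              have := le_max_left (Repar.rho Lb ((w.1.ofLp.1 : EuclideanSpace ℝ (Fin 2)) 0))
                ((w.1.ofLp.1 : EuclideanSpace ℝ (Fin 2)) 0 - w.1.ofLp.2)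
              have h4 : dist ((H w) : EuclideanSpace ℝ (Fin 2)) ((Opt : EuclideanSpace ℝ (Fin 2))) = dist (H w) Opt := rfl
              linarith [h4 ▸ h2]
            by_contra hcon
            push_neg at hcon
            have h4 : Repar.rho Lb (N:ℝ) ≤ Repar.rho Lb ((w.1.ofLp.1 : EuclideanSpace ℝ (Fin 2)) 0) :=
              Repar.rho_monotone hL1 (le_of_lt hcon)
            rw [Repar.rho_nat] at h4
            have := le_max_left r 0
            linarith
          have keys : ∀ w : Cyl p, w ∈ H ⁻¹' B → w.1.ofLp.2 ≤ (N:ℝ) + 1 := by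
            intro w hw
            have h1 : w.1.ofLp.2 ≤ p w.1.ofLp.1 + 1 := w.2.2
            have h2 := hpq w.1.ofLp.1
            have h3 := Repar.rho_nonneg hL1 ((w.1.ofLp.1 : EuclideanSpace ℝ (Fin 2)) 0)
            have h4 := keyx w hw
            linarith
          refine Metric.isBounded_iff.mpr ⟨3*(N:ℝ)+1, ?_⟩
          intro w hw w' hw'
          refine le_trans (Repar.cyl_dist_le p w w') ?_
          have hqd : dist w.1.ofLp.1 w'.1.ofLp.1
              = dist (w.1.ofLp.1 : EuclideanSpace ℝ (Fin 2)) (w'.1.ofLp.1 : EuclideanSpace ℝ (Fin 2)) := rfl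
          have b1 : |(w.1.ofLp.1 : EuclideanSpace ℝ (Fin 2)) 0 - (w'.1.ofLp.1 : EuclideanSpace ℝ (Fin 2)) 0| ≤ (N:ℝ) := by
            rw [abs_sub_le_iff]
            constructor
            · linarith [keyx w hw, keyx w' hw', qx0 w'.1.ofLp.1]
            · linarith [keyx w hw, keyx w' hw', qx0 w.1.ofLp.1]
          have b2 : |(w.1.ofLp.1 : EuclideanSpace ℝ (Fin 2)) 1 - (w'.1.ofLp.1 : EuclideanSpace ℝ (Fin 2)) 1| ≤ (N:ℝ) := by
            rw [abs_sub_le_iff]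
            constructor
            · linarith [keyx w hw, qtx w.1.ofLp.1, qt0 w'.1.ofLp.1]
            · linarith [keyx w' hw', qtx w'.1.ofLp.1, qt0 w.1.ofLp.1]
          have b3 : |w.1.ofLp.2 - w'.1.ofLp.2| ≤ (N:ℝ)+1 := by
            rw [abs_sub_le_iff]
            constructor
            · linarith [keys w hw, w'.2.1]
            · linarith [keys w' hw', w.2.1]
          have := le_trans (hqd ▸ Repar.dist_le_abs_add
            (w.1.ofLp.1 : EuclideanSpace ℝ (Fin 2)) (w'.1.ofLp.1 : EuclideanSpace ℝ (Fin 2))) (add_le_add b1 b2)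
          linarith
        · -- bottom end is the identity
          intro q
          apply Subtype.ext
          show Repar.vec2 (max (Repar.rho Lb ((q : EuclideanSpace ℝ (Fin 2)) 0)) ((q : EuclideanSpace ℝ (Fin 2)) 0 - 0))
            ((q : EuclideanSpace ℝ (Fin 2)) 1 * (max (Repar.rho Lb ((q : EuclideanSpace ℝ (Fin 2)) 0)) ((q : EuclideanSpace ℝ (Fin 2)) 0 - 0)) / (q : EuclideanSpace ℝ (Fin 2)) 0)
            = (q : EuclideanSpace ℝ (Fin 2))
          rw [sub_zero, max_eq_right (Repar.rho_le_self hL1 (qx0 q))]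
          have h2 : (q : EuclideanSpace ℝ (Fin 2)) 1 * (q : EuclideanSpace ℝ (Fin 2)) 0 / (q : EuclideanSpace ℝ (Fin 2)) 0
              = (q : EuclideanSpace ℝ (Fin 2)) 1 := by
            rcases eq_or_lt_of_le (qx0 q) with h | h
            · have ht : (q : EuclideanSpace ℝ (Fin 2)) 1 = 0 :=
                le_antisymm (h ▸ qtx q) (qt0 q)
              rw [ht, zero_mul, zero_div]
            · rw [mul_div_assoc, div_self (ne_of_gt h), mul_one]
          rw [h2]
          ext i
          fin_cases i <;> rfl
        · -- top end is g
          intro q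
          apply Subtype.ext
          show Repar.vec2 (max (Repar.rho Lb ((q : EuclideanSpace ℝ (Fin 2)) 0)) ((q : EuclideanSpace ℝ (Fin 2)) 0 - (p q + 1)))
            ((q : EuclideanSpace ℝ (Fin 2)) 1 * (max (Repar.rho Lb ((q : EuclideanSpace ℝ (Fin 2)) 0)) ((q : EuclideanSpace ℝ (Fin 2)) 0 - (p q + 1))) / (q : EuclideanSpace ℝ (Fin 2)) 0)
            = (g q : EuclideanSpace ℝ (Fin 2))
          have h1 : (q : EuclideanSpace ℝ (Fin 2)) 0 - (p q + 1)
              = Repar.rho Lb ((q : EuclideanSpace ℝ (Fin 2)) 0) - 1 := by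
            rw [hpq]; ring
          rw [h1, max_eq_left (by linarith)]
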